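/- Let π be an s/u-bijective pair for a Smale space (X, φ). Then there exists N₀ ≥ 0 such that for all L, M ≥ 0 with L > N₀ or M > N₀, every element (y_0, …, y_L, z_0, …, z_M) of Σ_{L,M}(π) has a repeated entry (two equal y-coordinates if L > N₀, or two equal z-coordinates if M > N₀). -/

import Mathlib

open Filter Topology Set

/-- A Smale space structure on a compact metric space. -/
structure SmaleSpace (X : Type) [MetricSpace X] : Type where
  compact : CompactSpace X
  phi : X ≃ₜ X
  eps : ℝ
  eps_pos : 0 < eps
  lam : ℝ
  lam_pos : 0 < lam
  lam_lt_one : lam < 1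
  bracket : X → X → X
  bracket_cont : ContinuousOn (fun p : X × X => bracket p.1 p.2) {p | dist p.1 p.2 ≤ eps}
  bracket_self : ∀ x, bracket x x = x
  bracket_eq₁ : ∀ x y z, dist x y ≤ eps → dist y z ≤ eps → dist x z ≤ eps →
    bracket x (bracket y z) = bracket x z
  bracket_eq₂ : ∀ x y z, dist x y ≤ eps → dist y z ≤ eps → dist x z ≤ eps →
    bracket (bracket x y) z = bracket x z
  bracket_phi : ∀ x y, dist x y ≤ eps → dist (phi x) (phi y) ≤ eps →
    phi (bracket x y) = bracket (phi x) (phi y)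
  contract_s : ∀ x y z, dist x y ≤ eps → bracket x y = y → dist x z ≤ eps → bracket x z = z →
    dist (phi y) (phi z) ≤ lam * dist y z
  contract_u : ∀ x y z, dist x y ≤ eps → bracket y x = y → dist x z ≤ eps → bracket z x = z →
    dist (phi.symm y) (phi.symm z) ≤ lam * dist y z

namespace SmaleSpace

variable {X : Type} [MetricSpace X]

/-- The local stable set `X^s(x, ε)`. -/
def locStable (S : SmaleSpace X) (x : X) (ε : ℝ) : Set X :=
  {y | dist x y ≤ ε ∧ S.bracket x y = y}

/-- The local unstable set `X^u(x, ε)`. -/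
def locUnstable (S : SmaleSpace X) (x : X) (ε : ℝ) : Set X :=
  {y | dist x y ≤ ε ∧ S.bracket y x = y}

end SmaleSpace

/-- Stable equivalence: the forward orbits are asymptotic. -/
def StableEquiv {X : Type} [MetricSpace X] (φ : X → X) (x y : X) : Prop :=
  Tendsto (fun n : ℕ => dist (φ^[n] x) (φ^[n] y)) atTop (𝓝 0)

/-- Unstable equivalence: the backward orbits are asymptotic. -/
def UnstableEquiv {X : Type} [MetricSpace X] (φ : X ≃ₜ X) (x y : X) : Prop :=
  Tendsto (fun n : ℕ => dist ((φ.symm : X → X)^[n] x) ((φ.symm : X → X)^[n] y)) atTop (𝓝 0)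

/-- A point-free formulation of non-wandering: every point is non-wandering. -/
def NonWandering {X : Type} [TopologicalSpace X] (φ : X → X) : Prop :=
  ∀ x : X, ∀ U ∈ 𝓝 x, ∃ n : ℕ, 1 ≤ n ∧ (φ^[n] '' U ∩ U).Nonempty

/-- A factor map between topological dynamical systems. -/
structure IsFactorMap {Y X : Type} [TopologicalSpace Y] [TopologicalSpace X]
    (ψ : Y ≃ₜ Y) (φ : X ≃ₜ X) (π : Y → X) : Prop where
  continuous : Continuous π
  surjective : Function.Surjective π
  semiconj : ∀ y, π (ψ y) = φ (π y)

/-- An `s`-resolving factor map: injective on stable equivalence classes. -/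
structure IsSResolving {Y X : Type} [MetricSpace Y] [MetricSpace X]
    (ψ : Y ≃ₜ Y) (φ : X ≃ₜ X) (π : Y → X) extends IsFactorMap ψ φ π : Prop where
  inj : ∀ y : Y, Set.InjOn π {y' | StableEquiv (⇑ψ) y y'}

/-- A `u`-resolving factor map: injective on unstable equivalence classes. -/
structure IsUResolving {Y X : Type} [MetricSpace Y] [MetricSpace X]
    (ψ : Y ≃ₜ Y) (φ : X ≃ₜ X) (π : Y → X) extends IsFactorMap ψ φ π : Prop where
  inj : ∀ y : Y, Set.InjOn π {y' | UnstableEquiv ψ y y'}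

/-- An `s`-bijective factor map: bijective from each stable class onto that of the image. -/
structure IsSBij {Y X : Type} [MetricSpace Y] [MetricSpace X]
    (ψ : Y ≃ₜ Y) (φ : X ≃ₜ X) (π : Y → X) extends IsFactorMap ψ φ π : Prop where
  bij : ∀ y : Y, Set.BijOn π {y' | StableEquiv (⇑ψ) y y'} {x | StableEquiv (⇑φ) (π y) x}

/-- A `u`-bijective factor map: bijective from each unstable class onto that of the image. -/
structure IsUBij {Y X : Type} [MetricSpace Y] [MetricSpace X]
    (ψ : Y ≃ₜ Y) (φ : X ≃ₜ X) (π : Y → X) extends IsFactorMap ψ φ π : Prop where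
  bij : ∀ y : Y, Set.BijOn π {y' | UnstableEquiv ψ y y'} {x | UnstableEquiv φ (π y) x}

section Krieger

variable {X : Type} [MetricSpace X]

/-- The collection of compact open subsets of local stable sets. -/
def DSsets (S : SmaleSpace X) : Set (Set X) :=
  {E | IsCompact E ∧ ∃ x ε, 0 < ε ∧ ε ≤ S.eps ∧ E ⊆ S.locStable x ε ∧
    ∃ U : Set X, IsOpen U ∧ E = U ∩ S.locStable x ε}

/-- The collection of compact open subsets of local unstable sets. -/
def DUsets (S : SmaleSpace X) : Set (Set X) :=
  {E | IsCompact E ∧ ∃ x ε, 0 < ε ∧ ε ≤ S.eps ∧ E ⊆ S.locUnstable x ε ∧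
    ∃ U : Set X, IsOpen U ∧ E = U ∩ S.locUnstable x ε}

/-- The elementwise bracket `[E, F]` of two sets. -/
def bracketSet (S : SmaleSpace X) (E F : Set X) : Set X :=
  {z | ∃ e ∈ E, ∃ f ∈ F, z = S.bracket e f}

/-- All brackets of elements of `E` with elements of `F` are defined. -/
def bracketOk (S : SmaleSpace X) (E F : Set X) : Prop :=
  ∀ e ∈ E, ∀ f ∈ F, dist e f ≤ S.eps

/-- The smallest equivalence relation on compact open subsets of local stable sets with
`E ∼ F` when `[E,F] = F` and `[F,E] = E`, and with `E ∼ F` iff `φ(E) ∼ φ(F)` whenever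
all four sets are in `𝒟ˢ`. -/
inductive KriegerS (S : SmaleSpace X) : Set X → Set X → Prop
  | base : ∀ E F, E ∈ DSsets S → F ∈ DSsets S → bracketOk S E F → bracketOk S F E →
      bracketSet S E F = F → bracketSet S F E = E → KriegerS S E F
  | fwd : ∀ E F, E ∈ DSsets S → F ∈ DSsets S →
      (⇑S.phi '' E) ∈ DSsets S → (⇑S.phi '' F) ∈ DSsets S →
      KriegerS S E F → KriegerS S (⇑S.phi '' E) (⇑S.phi '' F)
  | bwd : ∀ E F, E ∈ DSsets S → F ∈ DSsets S →
      (⇑S.phi '' E) ∈ DSsets S → (⇑S.phi '' F) ∈ DSsets S →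
      KriegerS S (⇑S.phi '' E) (⇑S.phi '' F) → KriegerS S E F
  | refl : ∀ E, E ∈ DSsets S → KriegerS S E E
  | symm : ∀ E F, KriegerS S E F → KriegerS S F E
  | trans : ∀ E F G, KriegerS S E F → KriegerS S F G → KriegerS S E G

/-- The analogous equivalence relation for unstable sets. -/
inductive KriegerU (S : SmaleSpace X) : Set X → Set X → Prop
  | base : ∀ E F, E ∈ DUsets S → F ∈ DUsets S → bracketOk S E F → bracketOk S F E →
      bracketSet S E F = F → bracketSet S F E = E → KriegerU S E F
  | fwd : ∀ E F, E ∈ DUsets S → F ∈ DUsets S →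
      (⇑S.phi '' E) ∈ DUsets S → (⇑S.phi '' F) ∈ DUsets S →
      KriegerU S E F → KriegerU S (⇑S.phi '' E) (⇑S.phi '' F)
  | bwd : ∀ E F, E ∈ DUsets S → F ∈ DUsets S →
      (⇑S.phi '' E) ∈ DUsets S → (⇑S.phi '' F) ∈ DUsets S →
      KriegerU S (⇑S.phi '' E) (⇑S.phi '' F) → KriegerU S E F
  | refl : ∀ E, E ∈ DUsets S → KriegerU S E E
  | symm : ∀ E F, KriegerU S E F → KriegerU S F E
  | trans : ∀ E F G, KriegerU S E F → KriegerU S F G → KriegerU S E G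

/-- Relations defining Krieger's (future) dimension group. -/
def DsRels (S : SmaleSpace X) : Set (FreeAbelianGroup {E : Set X // E ∈ DSsets S}) :=
  {a | ∃ E F : {E : Set X // E ∈ DSsets S}, KriegerS S E.1 F.1 ∧
      a = FreeAbelianGroup.of E - FreeAbelianGroup.of F} ∪
  {a | ∃ E F U : {E : Set X // E ∈ DSsets S}, Disjoint E.1 F.1 ∧ U.1 = E.1 ∪ F.1 ∧
      a = FreeAbelianGroup.of U - FreeAbelianGroup.of E - FreeAbelianGroup.of F}

def DuRels (S : SmaleSpace X) : Set (FreeAbelianGroup {E : Set X // E ∈ DUsets S}) :=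
  {a | ∃ E F : {E : Set X // E ∈ DUsets S}, KriegerU S E.1 F.1 ∧
      a = FreeAbelianGroup.of E - FreeAbelianGroup.of F} ∪
  {a | ∃ E F U : {E : Set X // E ∈ DUsets S}, Disjoint E.1 F.1 ∧ U.1 = E.1 ∪ F.1 ∧
      a = FreeAbelianGroup.of U - FreeAbelianGroup.of E - FreeAbelianGroup.of F}

/-- Krieger's dimension group `D^s`. -/
abbrev Ds (S : SmaleSpace X) : Type :=
  FreeAbelianGroup {E : Set X // E ∈ DSsets S} ⧸ AddSubgroup.closure (DsRels S)

/-- Krieger's dimension group `D^u`. -/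
abbrev Du (S : SmaleSpace X) : Type :=
  FreeAbelianGroup {E : Set X // E ∈ DUsets S} ⧸ AddSubgroup.closure (DuRels S)

/-- The class `[E]` in `D^s`. -/
def mkDs (S : SmaleSpace X) (E : {E : Set X // E ∈ DSsets S}) : Ds S :=
  QuotientAddGroup.mk (FreeAbelianGroup.of E)

/-- The class `[E]` in `D^u`. -/
def mkDu (S : SmaleSpace X) (E : {E : Set X // E ∈ DUsets S}) : Du S :=
  QuotientAddGroup.mk (FreeAbelianGroup.of E)

end Krieger

section Induced

variable {Y X : Type} [MetricSpace Y] [MetricSpace X]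

/-- `f` is the covariant map on `D^s` induced by (an `s`-bijective) `π`: it sends `[E]` to `[π(E)]`. -/
def CovSProp (S : SmaleSpace Y) (S' : SmaleSpace X) (π : Y → X) (f : Ds S →+ Ds S') : Prop :=
  ∀ E : {E : Set Y // E ∈ DSsets S}, ∃ h' : π '' E.1 ∈ DSsets S',
    f (mkDs S E) = mkDs S' ⟨π '' E.1, h'⟩

/-- `f` is the covariant map on `D^u` induced by (a `u`-bijective) `π`. -/
def CovUProp (S : SmaleSpace Y) (S' : SmaleSpace X) (π : Y → X) (f : Du S →+ Du S') : Prop :=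
  ∀ E : {E : Set Y // E ∈ DUsets S}, ∃ h' : π '' E.1 ∈ DUsets S',
    f (mkDu S E) = mkDu S' ⟨π '' E.1, h'⟩

/-- `g` is the contravariant map on `D^s` induced by (a `u`-bijective) `π`: it sends `[E']` to
`Σᵢ [Eᵢ]` where `π⁻¹(E')` is written as a finite disjoint union of the `Eᵢ ∈ 𝒟^s`. -/
def ContraSProp (S : SmaleSpace Y) (S' : SmaleSpace X) (π : Y → X) (g : Ds S' →+ Ds S) : Prop :=
  ∀ E' : {E : Set X // E ∈ DSsets S'},
    (∃ (n : ℕ) (Es : Fin n → {E : Set Y // E ∈ DSsets S}),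
      (Pairwise fun i j => Disjoint (Es i).1 (Es j).1) ∧ (⋃ i, (Es i).1) = π ⁻¹' E'.1) ∧
    ∀ (n : ℕ) (Es : Fin n → {E : Set Y // E ∈ DSsets S}),
      (Pairwise fun i j => Disjoint (Es i).1 (Es j).1) → (⋃ i, (Es i).1) = π ⁻¹' E'.1 →
      g (mkDs S' E') = ∑ i, mkDs S (Es i)

/-- `g` is the contravariant map on `D^u` induced by (an `s`-bijective) `π`. -/
def ContraUProp (S : SmaleSpace Y) (S' : SmaleSpace X) (π : Y → X) (g : Du S' →+ Du S) : Prop :=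
  ∀ E' : {E : Set X // E ∈ DUsets S'},
    (∃ (n : ℕ) (Es : Fin n → {E : Set Y // E ∈ DUsets S}),
      (Pairwise fun i j => Disjoint (Es i).1 (Es j).1) ∧ (⋃ i, (Es i).1) = π ⁻¹' E'.1) ∧
    ∀ (n : ℕ) (Es : Fin n → {E : Set Y // E ∈ DUsets S}),
      (Pairwise fun i j => Disjoint (Es i).1 (Es j).1) → (⋃ i, (Es i).1) = π ⁻¹' E'.1 →
      g (mkDu S' E') = ∑ i, mkDu S (Es i)

open Classical in
/-- The map `π^s : D^s(Σ) → D^s(Σ')` induced by an `s`-bijective factor map. -/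
noncomputable def inducedS (S : SmaleSpace Y) (S' : SmaleSpace X) (π : Y → X) : Ds S →+ Ds S' :=
  if h : ∃ f, CovSProp S S' π f then h.choose else 0

open Classical in
/-- The map `π^{s*} : D^s(Σ') → D^s(Σ)` induced by a `u`-bijective factor map. -/
noncomputable def inducedSstar (S : SmaleSpace Y) (S' : SmaleSpace X) (π : Y → X) :
    Ds S' →+ Ds S :=
  if h : ∃ g, ContraSProp S S' π g then h.choose else 0

end Induced

section Pairs

variable {X : Type} [MetricSpace X]

/-- An `s/u`-bijective pair for a Smale space. -/
structure SUPair (T : SmaleSpace X) : Type 1 where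
  Y : Type
  Z : Type
  [mY : MetricSpace Y]
  [mZ : MetricSpace Z]
  SY : SmaleSpace Y
  SZ : SmaleSpace Z
  ps : Y → X
  pu : Z → X
  ps_sbij : IsSBij SY.phi T.phi ps
  pu_ubij : IsUBij SZ.phi T.phi pu
  Yu_td : ∀ y ε, 0 < ε → ε ≤ SY.eps → IsTotallyDisconnected (SY.locUnstable y ε)
  Zs_td : ∀ z ε, 0 < ε → ε ≤ SZ.eps → IsTotallyDisconnected (SZ.locStable z ε)

attribute [instance] SUPair.mY SUPair.mZ

variable {T : SmaleSpace X}

/-- The fibred product `Σ_{L,M}(π)` of `L+1` copies of `Y` and `M+1` copies of `Z` over `X`. -/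
abbrev SigmaLM (P : SUPair T) (L M : ℕ) : Type :=
  {p : (Fin (L + 1) → P.Y) × (Fin (M + 1) → P.Z) // ∀ i j, P.ps (p.1 i) = P.pu (p.2 j)}

/-- The dynamics `σ_{L,M}` on the fibred product. -/
def sigmaLM (P : SUPair T) (L M : ℕ) : SigmaLM P L M ≃ₜ SigmaLM P L M where
  toFun p := ⟨(fun i => P.SY.phi (p.1.1 i), fun j => P.SZ.phi (p.1.2 j)), by
    intro i j
    dsimp only
    rw [P.ps_sbij.toIsFactorMap.semiconj, P.pu_ubij.toIsFactorMap.semiconj, p.2 i j]⟩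
  invFun p := ⟨(fun i => P.SY.phi.symm (p.1.1 i), fun j => P.SZ.phi.symm (p.1.2 j)), by
    intro i j
    dsimp only
    have hs : ∀ y, P.ps (P.SY.phi.symm y) = T.phi.symm (P.ps y) := by
      intro y
      have h := P.ps_sbij.toIsFactorMap.semiconj (P.SY.phi.symm y)
      rw [P.SY.phi.apply_symm_apply] at h
      rw [h, T.phi.symm_apply_apply]
    have hu : ∀ z, P.pu (P.SZ.phi.symm z) = T.phi.symm (P.pu z) := by
      intro z
      have h := P.pu_ubij.toIsFactorMap.semiconj (P.SZ.phi.symm z)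
      rw [P.SZ.phi.apply_symm_apply] at h
      rw [h, T.phi.symm_apply_apply]
    rw [hs, hu, p.2 i j]⟩
  left_inv p := Subtype.ext (Prod.ext (funext fun i => P.SY.phi.symm_apply_apply _)
    (funext fun j => P.SZ.phi.symm_apply_apply _))
  right_inv p := Subtype.ext (Prod.ext (funext fun i => P.SY.phi.apply_symm_apply _)
    (funext fun j => P.SZ.phi.apply_symm_apply _))
  continuous_toFun := by
    apply Continuous.subtype_mk
    exact Continuous.prodMk
      (continuous_pi fun i => P.SY.phi.continuous.comp
        ((continuous_apply i).comp (continuous_fst.comp continuous_subtype_val)))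
      (continuous_pi fun j => P.SZ.phi.continuous.comp
        ((continuous_apply j).comp (continuous_snd.comp continuous_subtype_val)))
  continuous_invFun := by
    apply Continuous.subtype_mk
    exact Continuous.prodMk
      (continuous_pi fun i => P.SY.phi.symm.continuous.comp
        ((continuous_apply i).comp (continuous_fst.comp continuous_subtype_val)))
      (continuous_pi fun j => P.SZ.phi.symm.continuous.comp
        ((continuous_apply j).comp (continuous_snd.comp continuous_subtype_val)))

/-- The map `δ_{l,}` deleting the `y`-entry at position `l`. -/
def delY (P : SUPair T) {L M : ℕ} (l : Fin (L + 2)) : SigmaLM P (L + 1) M → SigmaLM P L M :=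
  fun p => ⟨(fun i => p.1.1 (l.succAbove i), p.1.2), fun i j => p.2 (l.succAbove i) j⟩

/-- The map `δ_{,m}` deleting the `z`-entry at position `m`. -/
def delZ (P : SUPair T) {L M : ℕ} (m : Fin (M + 2)) : SigmaLM P L (M + 1) → SigmaLM P L M :=
  fun p => ⟨(p.1.1, fun j => p.1.2 (m.succAbove j)), fun i j => p.2 i (m.succAbove j)⟩

/-- An `s/u`-bijective pair together with chosen Smale space structures on the fibred
products, compatible with the dynamics `σ_{L,M}` (such structures exist since the
`Σ_{L,M}(π)` are shifts of finite type). -/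
structure SUPairData (T : SmaleSpace X) extends SUPair T where
  SS : ∀ L M : ℕ, SmaleSpace (SigmaLM toSUPair L M)
  SS_phi : ∀ L M : ℕ, (SS L M).phi = sigmaLM toSUPair L M

/-- Index set for the degree-`N` part of the double complex: pairs `(L, M)` with `L - M = N`. -/
abbrev HIdx (N : ℤ) : Type := {q : ℕ × ℕ // (q.1 : ℤ) - (q.2 : ℤ) = N}

/-- The degree-`N` group `C^s_N(π) = ⊕_{L-M=N} D^s(Σ_{L,M}(π))` of the double complex. -/
abbrev CNgrp (P : SUPairData T) (N : ℤ) : Type :=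
  DirectSum (HIdx N) (fun q => Ds (P.SS q.1.1 q.1.2))

open Classical in
/-- The component of the boundary map on the `(L,M)`-summand. -/
noncomputable def bdryAt (P : SUPairData T) (N M' : ℤ) (q : HIdx N) :
    Ds (P.SS q.1.1 q.1.2) →+ CNgrp P M' :=
  (match q with
    | ⟨(0, _), _⟩ => 0
    | ⟨(L + 1, M), _⟩ =>
      if hN : (L : ℤ) - (M : ℤ) = M' then
        ∑ l : Fin (L + 2), ((-1 : ℤ) ^ (l : ℕ)) •
          ((DirectSum.of (fun r : HIdx M' => Ds (P.SS r.1.1 r.1.2)) ⟨(L, M), hN⟩).comp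
            (inducedS (P.SS (L + 1) M) (P.SS L M) (delY P.toSUPair l)))
      else 0) +
  (if hN : (q.1.1 : ℤ) - ((q.1.2 + 1 : ℕ) : ℤ) = M' then
    ∑ m : Fin (q.1.2 + 2), ((-1 : ℤ) ^ ((m : ℕ) + q.1.1)) •
      ((DirectSum.of (fun r : HIdx M' => Ds (P.SS r.1.1 r.1.2)) ⟨(q.1.1, q.1.2 + 1), hN⟩).comp
        (inducedSstar (P.SS q.1.1 (q.1.2 + 1)) (P.SS q.1.1 q.1.2) (delZ P.toSUPair m)))
  else 0)

open Classical in
/-- The boundary map `∂^s_N(π) : C^s_N(π) → C^s_{N-1}(π)` (realised as a map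
`C^s_N(π) → C^s_{M'}(π)`, which is the boundary when `M' = N - 1`). -/
noncomputable def bdry (P : SUPairData T) (N M' : ℤ) : CNgrp P N →+ CNgrp P M' :=
  DirectSum.toAddMonoid fun q => bdryAt P N M' q

/-- The kernel of the boundary at level `N`. -/
noncomputable def Hker (P : SUPairData T) (N : ℤ) : AddSubgroup (CNgrp P N) :=
  (bdry P N (N - 1)).ker

/-- The image of the boundary from level `N+1`. -/
noncomputable def Him (P : SUPairData T) (N : ℤ) : AddSubgroup (CNgrp P N) :=
  (bdry P (N + 1) N).range

/-- The homology `H^s_N` of the double complex of the `s/u`-bijective pair. -/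
abbrev Hsgrp (P : SUPairData T) (N : ℤ) : Type :=
  Hker P N ⧸ (Him P N).addSubgroupOf (Hker P N)

end Pairs

section RepeatedEntriesAux

namespace SmaleSpace

variable {W : Type} [MetricSpace W]

lemma eps_nonneg (S : SmaleSpace W) : (0 : ℝ) ≤ S.eps := S.eps_pos.le

lemma lam_nonneg (S : SmaleSpace W) : (0 : ℝ) ≤ S.lam := S.lam_pos.le

lemma pow_lam_le_one (S : SmaleSpace W) (n : ℕ) : S.lam ^ n ≤ 1 :=
  pow_le_one₀ S.lam_nonneg S.lam_lt_one.le

/-- Uniform continuity of the bracket near the diagonal. -/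
lemma bracket_modulus (S : SmaleSpace W) {δ : ℝ} (hδ : 0 < δ) :
    ∃ γ : ℝ, 0 < γ ∧ γ ≤ S.eps ∧ ∀ a b : W, dist a b ≤ γ → dist a (S.bracket a b) ≤ δ := by
  haveI := S.compact
  have hDc : IsCompact {p : W × W | dist p.1 p.2 ≤ S.eps} :=
    (isClosed_le (continuous_fst.dist continuous_snd) continuous_const).isCompact
  have huc := hDc.uniformContinuousOn_of_continuous S.bracket_cont
  rw [Metric.uniformContinuousOn_iff] at huc
  obtain ⟨η, hη, H⟩ := huc δ hδ
  refine ⟨min (η / 2) S.eps, lt_min (by linarith) S.eps_pos, min_le_right _ _, ?_⟩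
  intro a b hab
  have hab' : dist a b ≤ S.eps := hab.trans (min_le_right _ _)
  have h1 : ((a, b) : W × W) ∈ {p : W × W | dist p.1 p.2 ≤ S.eps} := hab'
  have h2 : ((a, a) : W × W) ∈ {p : W × W | dist p.1 p.2 ≤ S.eps} := by
    simp [Set.mem_setOf_eq, S.eps_nonneg]
  have hd : dist ((a, b) : W × W) ((a, a) : W × W) < η := by
    rw [Prod.dist_eq]
    simp only [dist_self]
    rw [max_eq_right dist_nonneg]
    calc dist b a = dist a b := dist_comm _ _
      _ ≤ min (η / 2) S.eps := hab
      _ ≤ η / 2 := min_le_left _ _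
      _ < η := by linarith
  have key : dist (S.bracket a b) (S.bracket a a) < δ := H _ h1 _ h2 hd
  rw [S.bracket_self a] at key
  rw [dist_comm]
  exact key.le

/-- Forward iteration along local stable sets. -/
lemma stable_iter (S : SmaleSpace W) {a : ℝ} (ha : a ≤ S.eps) {x z : W}
    (hd : dist x z ≤ a) (hb : S.bracket x z = z) (n : ℕ) :
    dist ((⇑S.phi)^[n] x) ((⇑S.phi)^[n] z) ≤ S.lam ^ n * a ∧
      S.bracket ((⇑S.phi)^[n] x) ((⇑S.phi)^[n] z) = (⇑S.phi)^[n] z := by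
  have ha0 : 0 ≤ a := dist_nonneg.trans hd
  induction n with
  | zero =>
    simp only [Function.iterate_zero_apply, pow_zero, one_mul]
    exact ⟨hd, hb⟩
  | succ n ih =>
    obtain ⟨ihd, ihb⟩ := ih
    have hle : S.lam ^ n * a ≤ a := by
      have := mul_le_mul_of_nonneg_right (S.pow_lam_le_one n) ha0
      simpa using this
    have hle1 : S.lam ^ (n + 1) * a ≤ a := by
      have := mul_le_mul_of_nonneg_right (S.pow_lam_le_one (n + 1)) ha0
      simpa using this
    have hdn : dist ((⇑S.phi)^[n] x) ((⇑S.phi)^[n] z) ≤ S.eps := ihd.trans (hle.trans ha)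
    have hc := S.contract_s ((⇑S.phi)^[n] x) ((⇑S.phi)^[n] x) ((⇑S.phi)^[n] z)
      (by simp [S.eps_nonneg]) (S.bracket_self _) hdn ihb
    have hd1 : dist ((⇑S.phi)^[n + 1] x) ((⇑S.phi)^[n + 1] z) ≤ S.lam ^ (n + 1) * a := by
      rw [Function.iterate_succ_apply', Function.iterate_succ_apply']
      calc dist (S.phi ((⇑S.phi)^[n] x)) (S.phi ((⇑S.phi)^[n] z))
          ≤ S.lam * dist ((⇑S.phi)^[n] x) ((⇑S.phi)^[n] z) := hc
        _ ≤ S.lam * (S.lam ^ n * a) := mul_le_mul_of_nonneg_left ihd S.lam_nonneg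
        _ = S.lam ^ (n + 1) * a := by ring
    refine ⟨hd1, ?_⟩
    have hdn1 : dist (S.phi ((⇑S.phi)^[n] x)) (S.phi ((⇑S.phi)^[n] z)) ≤ S.eps := by
      have h := hd1
      rw [Function.iterate_succ_apply', Function.iterate_succ_apply'] at h
      exact h.trans (hle1.trans ha)
    have hbp := S.bracket_phi _ _ hdn hdn1
    rw [ihb] at hbp
    rw [Function.iterate_succ_apply', Function.iterate_succ_apply']
    exact hbp.symm

/-- Backward iteration along local unstable sets. -/
lemma unstable_iter (S : SmaleSpace W) {a : ℝ} (ha : a ≤ S.eps) {x z : W}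
    (hd : dist x z ≤ a) (hb : S.bracket z x = z) (n : ℕ) :
    dist ((⇑S.phi.symm)^[n] x) ((⇑S.phi.symm)^[n] z) ≤ S.lam ^ n * a ∧
      S.bracket ((⇑S.phi.symm)^[n] z) ((⇑S.phi.symm)^[n] x) = (⇑S.phi.symm)^[n] z := by
  have ha0 : 0 ≤ a := dist_nonneg.trans hd
  induction n with
  | zero =>
    simp only [Function.iterate_zero_apply, pow_zero, one_mul]
    exact ⟨hd, hb⟩
  | succ n ih =>
    obtain ⟨ihd, ihb⟩ := ih
    have hle : S.lam ^ n * a ≤ a := by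
      have := mul_le_mul_of_nonneg_right (S.pow_lam_le_one n) ha0
      simpa using this
    have hle1 : S.lam ^ (n + 1) * a ≤ a := by
      have := mul_le_mul_of_nonneg_right (S.pow_lam_le_one (n + 1)) ha0
      simpa using this
    have hdn : dist ((⇑S.phi.symm)^[n] x) ((⇑S.phi.symm)^[n] z) ≤ S.eps := ihd.trans (hle.trans ha)
    have hc := S.contract_u ((⇑S.phi.symm)^[n] x) ((⇑S.phi.symm)^[n] x) ((⇑S.phi.symm)^[n] z)
      (by simp [S.eps_nonneg]) (S.bracket_self _) hdn ihb
    have hd1 : dist ((⇑S.phi.symm)^[n + 1] x) ((⇑S.phi.symm)^[n + 1] z) ≤ S.lam ^ (n + 1) * a := by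
      rw [Function.iterate_succ_apply', Function.iterate_succ_apply']
      calc dist (S.phi.symm ((⇑S.phi.symm)^[n] x)) (S.phi.symm ((⇑S.phi.symm)^[n] z))
          ≤ S.lam * dist ((⇑S.phi.symm)^[n] x) ((⇑S.phi.symm)^[n] z) := hc
        _ ≤ S.lam * (S.lam ^ n * a) := mul_le_mul_of_nonneg_left ihd S.lam_nonneg
        _ = S.lam ^ (n + 1) * a := by ring
    refine ⟨hd1, ?_⟩
    have e1 : S.phi ((⇑S.phi.symm)^[n + 1] x) = (⇑S.phi.symm)^[n] x := by
      rw [Function.iterate_succ_apply']; exact S.phi.apply_symm_apply _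
    have e2 : S.phi ((⇑S.phi.symm)^[n + 1] z) = (⇑S.phi.symm)^[n] z := by
      rw [Function.iterate_succ_apply']; exact S.phi.apply_symm_apply _
    have hdz : dist ((⇑S.phi.symm)^[n + 1] z) ((⇑S.phi.symm)^[n + 1] x) ≤ S.eps := by
      rw [dist_comm]; exact hd1.trans (hle1.trans ha)
    have hdz' : dist (S.phi ((⇑S.phi.symm)^[n + 1] z)) (S.phi ((⇑S.phi.symm)^[n + 1] x)) ≤
        S.eps := by
      rw [e1, e2, dist_comm]; exact hdn
    have hbp := S.bracket_phi ((⇑S.phi.symm)^[n + 1] z) ((⇑S.phi.symm)^[n + 1] x) hdz hdz'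
    rw [e1, e2, ihb] at hbp
    have := congrArg (⇑S.phi.symm) hbp
    rw [S.phi.symm_apply_apply] at this
    rw [this]
    exact (Function.iterate_succ_apply' _ _ _).symm

/-- Expansiveness: two points whose full orbits stay uniformly close are equal. -/
lemma expansive (S : SmaleSpace W) {ε₀ δ₀ : ℝ} (hε₀ : 0 < ε₀) (hεeps : ε₀ ≤ S.eps)
    (hbr : ∀ a b : W, dist a b ≤ ε₀ → dist a (S.bracket a b) ≤ δ₀)
    (hsum : δ₀ + ε₀ ≤ S.eps) {x z : W}
    (hf : ∀ n : ℕ, dist ((⇑S.phi)^[n] x) ((⇑S.phi)^[n] z) ≤ ε₀)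
    (hb : ∀ n : ℕ, dist ((⇑S.phi.symm)^[n] x) ((⇑S.phi.symm)^[n] z) ≤ ε₀) :
    z = x := by
  have hδ0 : 0 ≤ δ₀ := by
    have := hbr x x (by simp [hε₀.le])
    exact dist_nonneg.trans this
  have hxz : dist x z ≤ ε₀ := by simpa using hf 0
  have hxzeps : dist x z ≤ S.eps := hxz.trans hεeps
  set w := S.bracket x z with hw
  have hxw : dist x w ≤ δ₀ := hbr x z hxz
  have hbxw : S.bracket x w = w := by
    rw [hw]; exact S.bracket_eq₁ x x z (by simp [S.eps_nonneg]) hxzeps hxzeps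
  have hδeps : δ₀ ≤ S.eps := by linarith
  have hst := fun n => S.stable_iter hδeps hxw hbxw n
  have hwz : ∀ n : ℕ, dist ((⇑S.phi)^[n] w) ((⇑S.phi)^[n] z) ≤ S.eps := by
    intro n
    have hl : S.lam ^ n * δ₀ ≤ δ₀ := by
      have := mul_le_mul_of_nonneg_right (S.pow_lam_le_one n) hδ0
      simpa using this
    calc dist ((⇑S.phi)^[n] w) ((⇑S.phi)^[n] z)
        ≤ dist ((⇑S.phi)^[n] w) ((⇑S.phi)^[n] x) + dist ((⇑S.phi)^[n] x) ((⇑S.phi)^[n] z) :=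
          dist_triangle _ _ _
      _ ≤ S.lam ^ n * δ₀ + ε₀ := add_le_add (by rw [dist_comm]; exact (hst n).1) (hf n)
      _ ≤ δ₀ + ε₀ := by linarith
      _ ≤ S.eps := hsum
  have hR : ∀ n : ℕ, S.bracket ((⇑S.phi)^[n] w) ((⇑S.phi)^[n] z) = (⇑S.phi)^[n] w := by
    intro n
    induction n with
    | zero =>
      simp only [Function.iterate_zero_apply]
      rw [hw]
      exact S.bracket_eq₂ x z z hxzeps (by simp [S.eps_nonneg]) hxzeps
    | succ n ih =>
      have h2 : dist (S.phi ((⇑S.phi)^[n] w)) (S.phi ((⇑S.phi)^[n] z)) ≤ S.eps := by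
        have h := hwz (n + 1)
        rwa [Function.iterate_succ_apply', Function.iterate_succ_apply'] at h
      have hbp := S.bracket_phi ((⇑S.phi)^[n] w) ((⇑S.phi)^[n] z) (hwz n) h2
      rw [ih] at hbp
      rw [Function.iterate_succ_apply', Function.iterate_succ_apply']
      exact hbp.symm
  have hC : ∀ n m : ℕ, dist ((⇑S.phi)^[m] w) ((⇑S.phi)^[m] z) ≤ S.lam ^ n * S.eps := by
    intro n
    induction n with
    | zero => intro m; simpa using hwz m
    | succ n ih =>
      intro m
      have hc := S.contract_u ((⇑S.phi)^[m + 1] z) ((⇑S.phi)^[m + 1] z) ((⇑S.phi)^[m + 1] w)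
        (by simp [S.eps_nonneg]) (S.bracket_self _)
        (by rw [dist_comm]; exact hwz (m + 1)) (hR (m + 1))
      have e1 : S.phi.symm ((⇑S.phi)^[m + 1] z) = (⇑S.phi)^[m] z := by
        rw [Function.iterate_succ_apply']; exact S.phi.symm_apply_apply _
      have e2 : S.phi.symm ((⇑S.phi)^[m + 1] w) = (⇑S.phi)^[m] w := by
        rw [Function.iterate_succ_apply']; exact S.phi.symm_apply_apply _
      rw [e1, e2] at hc
      calc dist ((⇑S.phi)^[m] w) ((⇑S.phi)^[m] z)
          = dist ((⇑S.phi)^[m] z) ((⇑S.phi)^[m] w) := dist_comm _ _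
        _ ≤ S.lam * dist ((⇑S.phi)^[m + 1] z) ((⇑S.phi)^[m + 1] w) := hc
        _ = S.lam * dist ((⇑S.phi)^[m + 1] w) ((⇑S.phi)^[m + 1] z) := by rw [dist_comm]
        _ ≤ S.lam * (S.lam ^ n * S.eps) := mul_le_mul_of_nonneg_left (ih (m + 1)) S.lam_nonneg
        _ = S.lam ^ (n + 1) * S.eps := by ring
  have htend : Tendsto (fun n : ℕ => S.lam ^ n * S.eps) atTop (𝓝 0) := by
    have := (tendsto_pow_atTop_nhds_zero_of_lt_one S.lam_nonneg S.lam_lt_one).mul_const S.eps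
    simpa using this
  have hwzeq : w = z := by
    have hle : dist w z ≤ 0 :=
      ge_of_tendsto' htend (fun n => by simpa using hC n 0)
    exact eq_of_dist_eq_zero (le_antisymm hle dist_nonneg)
  have hbxz : S.bracket x z = z := by rw [← hwzeq]; exact hbxw
  have hQ : ∀ n : ℕ, S.bracket ((⇑S.phi.symm)^[n] x) ((⇑S.phi.symm)^[n] z) =
      (⇑S.phi.symm)^[n] z := by
    intro n
    induction n with
    | zero => simpa using hbxz
    | succ n ih =>
      have e1 : S.phi ((⇑S.phi.symm)^[n + 1] x) = (⇑S.phi.symm)^[n] x := by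
        rw [Function.iterate_succ_apply']; exact S.phi.apply_symm_apply _
      have e2 : S.phi ((⇑S.phi.symm)^[n + 1] z) = (⇑S.phi.symm)^[n] z := by
        rw [Function.iterate_succ_apply']; exact S.phi.apply_symm_apply _
      have h1 : dist ((⇑S.phi.symm)^[n + 1] x) ((⇑S.phi.symm)^[n + 1] z) ≤ S.eps :=
        (hb (n + 1)).trans hεeps
      have h2 : dist (S.phi ((⇑S.phi.symm)^[n + 1] x)) (S.phi ((⇑S.phi.symm)^[n + 1] z)) ≤
          S.eps := by
        rw [e1, e2]; exact (hb n).trans hεeps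
      have hbp := S.bracket_phi _ _ h1 h2
      rw [e1, e2, ih] at hbp
      have hh := congrArg (⇑S.phi.symm) hbp
      rw [S.phi.symm_apply_apply] at hh
      rw [hh]
      exact (Function.iterate_succ_apply' _ _ _).symm
  have hC' : ∀ n m : ℕ, dist ((⇑S.phi.symm)^[m] x) ((⇑S.phi.symm)^[m] z) ≤ S.lam ^ n * ε₀ := by
    intro n
    induction n with
    | zero => intro m; simpa using hb m
    | succ n ih =>
      intro m
      have hc := S.contract_s ((⇑S.phi.symm)^[m + 1] x) ((⇑S.phi.symm)^[m + 1] x)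
        ((⇑S.phi.symm)^[m + 1] z)
        (by simp [S.eps_nonneg]) (S.bracket_self _) ((hb (m + 1)).trans hεeps) (hQ (m + 1))
      have e1 : S.phi ((⇑S.phi.symm)^[m + 1] x) = (⇑S.phi.symm)^[m] x := by
        rw [Function.iterate_succ_apply']; exact S.phi.apply_symm_apply _
      have e2 : S.phi ((⇑S.phi.symm)^[m + 1] z) = (⇑S.phi.symm)^[m] z := by
        rw [Function.iterate_succ_apply']; exact S.phi.apply_symm_apply _
      rw [e1, e2] at hc
      calc dist ((⇑S.phi.symm)^[m] x) ((⇑S.phi.symm)^[m] z)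
          ≤ S.lam * dist ((⇑S.phi.symm)^[m + 1] x) ((⇑S.phi.symm)^[m + 1] z) := hc
        _ ≤ S.lam * (S.lam ^ n * ε₀) := mul_le_mul_of_nonneg_left (ih (m + 1)) S.lam_nonneg
        _ = S.lam ^ (n + 1) * ε₀ := by ring
  have htend' : Tendsto (fun n : ℕ => S.lam ^ n * ε₀) atTop (𝓝 0) := by
    have := (tendsto_pow_atTop_nhds_zero_of_lt_one S.lam_nonneg S.lam_lt_one).mul_const ε₀
    simpa using this
  have hle : dist x z ≤ 0 :=
    ge_of_tendsto' htend' (fun n => by simpa using hC' n 0)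
  exact (eq_of_dist_eq_zero (le_antisymm hle dist_nonneg)).symm

end SmaleSpace

/-- Fibers of an `s`-resolving factor map are uniformly bounded. -/
theorem fiber_card_bound {Y X : Type} [MetricSpace Y] [MetricSpace X]
    (S : SmaleSpace Y) (Sx : SmaleSpace X) (π : Y → X)
    (hcont : Continuous π) (hsemi : ∀ y, π (S.phi y) = Sx.phi (π y))
    (hinj : ∀ y : Y, Set.InjOn π {y' | StableEquiv (⇑S.phi) y y'}) :
    ∃ K : ℕ, ∀ (n : ℕ) (f : Fin n → Y), Function.Injective f →
      (∀ i j, π (f i) = π (f j)) → n ≤ K := by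
  haveI := S.compact
  haveI := Sx.compact
  -- iterated semiconjugacy, forwards and backwards
  have hsemin : ∀ (n : ℕ) (y : Y), π ((⇑S.phi)^[n] y) = (⇑Sx.phi)^[n] (π y) := by
    intro n
    induction n with
    | zero => intro y; simp
    | succ n ih =>
      intro y
      rw [Function.iterate_succ_apply', Function.iterate_succ_apply', ← ih, ← hsemi]
  have hsemib : ∀ y, π (S.phi.symm y) = Sx.phi.symm (π y) := by
    intro y
    have h := hsemi (S.phi.symm y)
    rw [S.phi.apply_symm_apply] at h
    have h2 := congrArg (⇑Sx.phi.symm) h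
    rw [Sx.phi.symm_apply_apply] at h2
    exact h2.symm
  have hseminb : ∀ (n : ℕ) (y : Y), π ((⇑S.phi.symm)^[n] y) = (⇑Sx.phi.symm)^[n] (π y) := by
    intro n
    induction n with
    | zero => intro y; simp
    | succ n ih =>
      intro y
      rw [Function.iterate_succ_apply', Function.iterate_succ_apply', ← ih, ← hsemib]
  -- constants for expansiveness of X
  obtain ⟨γ₀, hγ₀pos, hγ₀eps, hγ₀⟩ := Sx.bracket_modulus (half_pos Sx.eps_pos)
  set ε₀ := min γ₀ (Sx.eps / 2) with hε₀def
  have hε₀pos : 0 < ε₀ := lt_min hγ₀pos (half_pos Sx.eps_pos)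
  have hε₀eps : ε₀ ≤ Sx.eps := (min_le_right _ _).trans (by linarith [Sx.eps_pos])
  have hbr₀ : ∀ a b : X, dist a b ≤ ε₀ → dist a (Sx.bracket a b) ≤ Sx.eps / 2 :=
    fun a b h => hγ₀ a b (h.trans (min_le_left _ _))
  have hsum₀ : Sx.eps / 2 + ε₀ ≤ Sx.eps := by
    have : ε₀ ≤ Sx.eps / 2 := min_le_right _ _
    linarith
  -- modulus of uniform continuity for π
  have hπuc := CompactSpace.uniformContinuous_of_continuous hcont
  rw [Metric.uniformContinuous_iff] at hπuc
  obtain ⟨δ₁', hδ₁', hπmod'⟩ := hπuc ε₀ hε₀pos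
  set δ₁ := δ₁' / 2 with hδ₁def
  have hδ₁pos : 0 < δ₁ := half_pos hδ₁'
  have hπmod : ∀ a b : Y, dist a b ≤ δ₁ → dist (π a) (π b) ≤ ε₀ := by
    intro a b h
    exact (hπmod' (lt_of_le_of_lt h (by rw [hδ₁def]; linarith))).le
  -- constants for Y
  set ρ := min (δ₁ / 2) (S.eps / 2) with hρdef
  have hρpos : 0 < ρ := lt_min (half_pos hδ₁pos) (half_pos S.eps_pos)
  have hρeps : ρ ≤ S.eps := (min_le_right _ _).trans (by linarith [S.eps_pos])
  have hρδ : ρ ≤ δ₁ / 2 := min_le_left _ _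
  obtain ⟨γ₂, hγ₂pos, hγ₂eps, hγ₂⟩ := S.bracket_modulus hρpos
  set ε₁ := min γ₂ ρ with hε₁def
  have hε₁pos : 0 < ε₁ := lt_min hγ₂pos hρpos
  have hε₁ρ : ε₁ ≤ ρ := min_le_right _ _
  have hε₁eps : ε₁ ≤ S.eps := hε₁ρ.trans hρeps
  have hsumδ : ε₁ + ρ ≤ δ₁ := by linarith
  have hsumeps : ε₁ + ρ ≤ S.eps := by
    have h1 : ρ ≤ S.eps / 2 := min_le_right _ _
    linarith
  -- Key lemma: two sufficiently close points in a common fiber are locally unstably related.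
  have lemA : ∀ y y' : Y, π y = π y' → dist y y' ≤ ε₁ → S.bracket y' y = y' := by
    intro y y' hπ hd
    set u := S.bracket y' y with hu
    have hdyy' : dist y' y ≤ ε₁ := by rw [dist_comm]; exact hd
    have hy'u : dist y' u ≤ ρ := hγ₂ y' y (hdyy'.trans (min_le_left _ _))
    have hd_eps : dist y' y ≤ S.eps := hdyy'.trans hε₁eps
    have hbst : S.bracket y' u = u := by
      rw [hu]; exact S.bracket_eq₁ y' y' y (by simp [SmaleSpace.eps_nonneg]) hd_eps hd_eps
    have hbun : S.bracket u y = u := by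
      rw [hu]; exact S.bracket_eq₂ y' y y hd_eps (by simp [SmaleSpace.eps_nonneg]) hd_eps
    have hyu : dist y u ≤ ε₁ + ρ :=
      (dist_triangle y y' u).trans (add_le_add hd hy'u)
    have hst := fun n => S.stable_iter hρeps hy'u hbst n
    have hun := fun n => S.unstable_iter hsumeps hyu hbun n
    have hfwd : ∀ n : ℕ, dist ((⇑Sx.phi)^[n] (π y')) ((⇑Sx.phi)^[n] (π u)) ≤ ε₀ := by
      intro n
      rw [← hsemin n y', ← hsemin n u]
      apply hπmod
      have h1 := (hst n).1
      have h2 : S.lam ^ n * ρ ≤ δ₁ := by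
        have := mul_le_mul_of_nonneg_right (S.pow_lam_le_one n) hρpos.le
        simp only [one_mul] at this
        linarith
      exact h1.trans h2
    have hbwd : ∀ n : ℕ, dist ((⇑Sx.phi.symm)^[n] (π y')) ((⇑Sx.phi.symm)^[n] (π u)) ≤ ε₀ := by
      intro n
      rw [← hπ, ← hseminb n y, ← hseminb n u]
      apply hπmod
      have h1 := (hun n).1
      have h2 : S.lam ^ n * (ε₁ + ρ) ≤ δ₁ := by
        have := mul_le_mul_of_nonneg_right (S.pow_lam_le_one n) (by linarith : (0:ℝ) ≤ ε₁ + ρ)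
        simp only [one_mul] at this
        linarith
      exact h1.trans h2
    have hx : π u = π y' := Sx.expansive hε₀pos hε₀eps hbr₀ hsum₀ hfwd hbwd
    have hse : StableEquiv (⇑S.phi) y' u := by
      have hb' : ∀ n : ℕ, dist ((⇑S.phi)^[n] y') ((⇑S.phi)^[n] u) ≤ S.lam ^ n * ρ :=
        fun n => (hst n).1
      have htend : Tendsto (fun n : ℕ => S.lam ^ n * ρ) atTop (𝓝 0) := by
        have := (tendsto_pow_atTop_nhds_zero_of_lt_one S.lam_nonneg S.lam_lt_one).mul_const ρ
        simpa using this
      exact squeeze_zero (fun n => dist_nonneg) hb' htend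
    have hrefl : StableEquiv (⇑S.phi) y' y' := by
      show Tendsto (fun n : ℕ => dist ((⇑S.phi)^[n] y') ((⇑S.phi)^[n] y')) atTop (𝓝 0)
      simp only [dist_self]
      exact tendsto_const_nhds
    exact hinj y' hse hrefl hx
  -- one-step contraction for fiber pairs
  have step_down : ∀ y y' : Y, π y = π y' → dist (S.phi y) (S.phi y') ≤ ε₁ →
      dist y y' ≤ S.lam * dist (S.phi y) (S.phi y') := by
    intro y y' hπ hd
    have hπ1 : π (S.phi y) = π (S.phi y') := by rw [hsemi, hsemi, hπ]
    have hbr := lemA (S.phi y) (S.phi y') hπ1 hd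
    have hc := S.contract_u (S.phi y) (S.phi y) (S.phi y')
      (by simp [SmaleSpace.eps_nonneg]) (S.bracket_self _) (hd.trans hε₁eps) hbr
    simpa using hc
  -- iterated contraction for fiber pairs
  have chain : ∀ (k : ℕ) (y y' : Y), π y = π y' →
      dist ((⇑S.phi)^[k] y) ((⇑S.phi)^[k] y') ≤ ε₁ → dist y y' ≤ S.lam ^ k * ε₁ := by
    intro k
    induction k with
    | zero => intro y y' _ h; simpa using h
    | succ k ih =>
      intro y y' hπ h
      rw [Function.iterate_succ_apply, Function.iterate_succ_apply] at h
      have hπ1 : π (S.phi y) = π (S.phi y') := by rw [hsemi, hsemi, hπ]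
      have h1 := ih (S.phi y) (S.phi y') hπ1 h
      have h1' : dist (S.phi y) (S.phi y') ≤ ε₁ := by
        have hle : S.lam ^ k * ε₁ ≤ ε₁ := by
          have := mul_le_mul_of_nonneg_right (S.pow_lam_le_one k) hε₁pos.le
          simpa using this
        exact h1.trans hle
      calc dist y y' ≤ S.lam * dist (S.phi y) (S.phi y') := step_down y y' hπ h1'
        _ ≤ S.lam * (S.lam ^ k * ε₁) := mul_le_mul_of_nonneg_left h1 S.lam_nonneg
        _ = S.lam ^ (k + 1) * ε₁ := by ring
  -- distinct fiber points eventually separate permanently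
  have sep : ∀ y y' : Y, π y = π y' → y ≠ y' →
      ∃ N : ℕ, ∀ n, N ≤ n → ε₁ < dist ((⇑S.phi)^[n] y) ((⇑S.phi)^[n] y') := by
    intro y y' hπ hne
    by_contra hcon
    push_neg at hcon
    have key : ∀ k : ℕ, dist y y' ≤ S.lam ^ k * ε₁ := by
      intro k
      obtain ⟨n, hkn, hn⟩ := hcon k
      refine (chain n y y' hπ hn).trans ?_
      exact mul_le_mul_of_nonneg_right
        (pow_le_pow_of_le_one S.lam_nonneg S.lam_lt_one.le hkn) hε₁pos.le
    have htend : Tendsto (fun k : ℕ => S.lam ^ k * ε₁) atTop (𝓝 0) := by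
      have := (tendsto_pow_atTop_nhds_zero_of_lt_one S.lam_nonneg S.lam_lt_one).mul_const ε₁
      simpa using this
    have hle : dist y y' ≤ 0 := ge_of_tendsto' htend key
    exact hne (eq_of_dist_eq_zero (le_antisymm hle dist_nonneg))
  -- covering number
  obtain ⟨t, -, htfin, htcov⟩ := (isCompact_univ (X := Y)).finite_cover_balls (half_pos hε₁pos)
  refine ⟨htfin.toFinset.card, ?_⟩
  intro n f hfinj hfib
  by_contra hbig
  push_neg at hbig
  have hsep : ∀ i j : Fin n, i ≠ j → ∃ N : ℕ, ∀ m, N ≤ m →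
      ε₁ < dist ((⇑S.phi)^[m] (f i)) ((⇑S.phi)^[m] (f j)) :=
    fun i j hij => sep (f i) (f j) (hfib i j) (fun h => hij (hfinj h))
  classical
  let Np : Fin n → Fin n → ℕ := fun i j => if h : i ≠ j then (hsep i j h).choose else 0
  set nstar := (Finset.univ : Finset (Fin n × Fin n)).sup (fun p => Np p.1 p.2) with hnstar
  have hsepstar : ∀ i j : Fin n, i ≠ j →
      ε₁ < dist ((⇑S.phi)^[nstar] (f i)) ((⇑S.phi)^[nstar] (f j)) := by
    intro i j hij
    have hle : Np i j ≤ nstar :=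
      Finset.le_sup (f := fun p : Fin n × Fin n => Np p.1 p.2) (Finset.mem_univ (i, j))
    simp only [Np, dif_pos hij] at hle
    exact (hsep i j hij).choose_spec nstar hle
  have hcentre : ∀ i : Fin n, ∃ c ∈ t, dist ((⇑S.phi)^[nstar] (f i)) c < ε₁ / 2 := by
    intro i
    have hm := htcov (Set.mem_univ ((⇑S.phi)^[nstar] (f i)))
    rw [Set.mem_iUnion₂] at hm
    obtain ⟨c, hct, hc⟩ := hm
    exact ⟨c, hct, Metric.mem_ball.mp hc⟩
  choose c hct hcd using hcentre
  have hcinj : Function.Injective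
      (fun i : Fin n => (⟨c i, (htfin.mem_toFinset).2 (hct i)⟩ : {x // x ∈ htfin.toFinset})) := by
    intro i j hgij
    by_contra hne
    have hcc : c i = c j := congrArg Subtype.val hgij
    have h1 := hsepstar i j hne
    have h2 : dist ((⇑S.phi)^[nstar] (f i)) ((⇑S.phi)^[nstar] (f j)) < ε₁ := by
      calc dist ((⇑S.phi)^[nstar] (f i)) ((⇑S.phi)^[nstar] (f j))
          ≤ dist ((⇑S.phi)^[nstar] (f i)) (c i) + dist (c i) ((⇑S.phi)^[nstar] (f j)) :=
            dist_triangle _ _ _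
        _ < ε₁ / 2 + ε₁ / 2 := by
            apply add_lt_add (hcd i)
            rw [hcc, dist_comm]
            exact hcd j
        _ = ε₁ := by ring
    linarith
  have hcard := Fintype.card_le_of_injective _ hcinj
  simp only [Fintype.card_fin, Fintype.card_coe] at hcard
  omega

/-- The time-reversal of a Smale space: stable and unstable directions are exchanged. -/
def SmaleSpace.op {X : Type} [MetricSpace X] (S : SmaleSpace X) : SmaleSpace X where
  compact := S.compact
  phi := S.phi.symm
  eps := S.eps
  eps_pos := S.eps_pos
  lam := S.lam
  lam_pos := S.lam_pos
  lam_lt_one := S.lam_lt_one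
  bracket x y := S.bracket y x
  bracket_cont := by
    have hswap : Continuous (fun p : X × X => (p.2, p.1)) := continuous_snd.prodMk continuous_fst
    exact S.bracket_cont.comp hswap.continuousOn (fun p hp => by simpa [dist_comm] using hp)
  bracket_self x := S.bracket_self x
  bracket_eq₁ x y z h1 h2 h3 :=
    S.bracket_eq₂ z y x (by rwa [dist_comm]) (by rwa [dist_comm]) (by rwa [dist_comm])
  bracket_eq₂ x y z h1 h2 h3 :=
    S.bracket_eq₁ z y x (by rwa [dist_comm]) (by rwa [dist_comm]) (by rwa [dist_comm])
  bracket_phi x y h1 h2 := by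
    have h := S.bracket_phi (S.phi.symm y) (S.phi.symm x)
      (by rw [dist_comm]; exact h2)
      (by rw [S.phi.apply_symm_apply, S.phi.apply_symm_apply, dist_comm]; exact h1)
    rw [S.phi.apply_symm_apply, S.phi.apply_symm_apply] at h
    have h2' := congrArg (⇑S.phi.symm) h
    rw [S.phi.symm_apply_apply] at h2'
    exact h2'.symm
  contract_s x y z h1 h2 h3 h4 := S.contract_u x y z h1 h2 h3 h4
  contract_u x y z h1 h2 h3 h4 := by
    have := S.contract_s x y z h1 h2 h3 h4
    simpa using this

end RepeatedEntriesAux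

/-- For an `s/u`-bijective pair `π` for `(X, φ)` there is `N₀` such that for
all `L, M`, every element of `Σ_{L,M}(π)` has two equal `y`-coordinates as soon as `L > N₀`,
and two equal `z`-coordinates as soon as `M > N₀`. -/
theorem repeated_entries_in_fibred_products {X : Type} [MetricSpace X] {T : SmaleSpace X}
    (P : SUPair T) :
    ∃ N₀ : ℕ, ∀ (L M : ℕ) (p : SigmaLM P L M),
      (N₀ < L → ∃ i j : Fin (L + 1), i ≠ j ∧ p.1.1 i = p.1.1 j) ∧
      (N₀ < M → ∃ i j : Fin (M + 1), i ≠ j ∧ p.1.2 i = p.1.2 j) := by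
  obtain ⟨Ks, hKs⟩ := fiber_card_bound P.SY T P.ps P.ps_sbij.toIsFactorMap.continuous
    P.ps_sbij.toIsFactorMap.semiconj (fun y => (P.ps_sbij.bij y).injOn)
  have hsemiu : ∀ z, P.pu (P.SZ.op.phi z) = T.op.phi (P.pu z) := by
    intro z
    show P.pu (P.SZ.phi.symm z) = T.phi.symm (P.pu z)
    have h := P.pu_ubij.toIsFactorMap.semiconj (P.SZ.phi.symm z)
    rw [P.SZ.phi.apply_symm_apply] at h
    have h2 := congrArg (⇑T.phi.symm) h
    rw [T.phi.symm_apply_apply] at h2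
    exact h2.symm
  have hinju : ∀ z : P.Z, Set.InjOn P.pu {z' | StableEquiv (⇑(P.SZ.op).phi) z z'} :=
    fun z => (P.pu_ubij.bij z).injOn
  obtain ⟨Ku, hKu⟩ := fiber_card_bound P.SZ.op T.op P.pu P.pu_ubij.toIsFactorMap.continuous
    hsemiu hinju
  refine ⟨max Ks Ku, ?_⟩
  intro L M p
  constructor
  · intro hL
    by_contra hcon
    push_neg at hcon
    have hinj : Function.Injective p.1.1 := by
      intro i j hij
      by_contra hne
      exact hcon i j hne hij
    have hfib : ∀ i j, P.ps (p.1.1 i) = P.ps (p.1.1 j) :=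
      fun i j => (p.2 i 0).trans (p.2 j 0).symm
    have hb := hKs (L + 1) p.1.1 hinj hfib
    have hm : Ks ≤ max Ks Ku := le_max_left _ _
    omega
  · intro hM
    by_contra hcon
    push_neg at hcon
    have hinj : Function.Injective p.1.2 := by
      intro i j hij
      by_contra hne
      exact hcon i j hne hij
    have hfib : ∀ i j, P.pu (p.1.2 i) = P.pu (p.1.2 j) :=
      fun i j => (p.2 0 i).symm.trans (p.2 0 j)
    have hb := hKu (M + 1) p.1.2 hinj hfib
    have hm : Ku ≤ max Ks Ku := le_max_right _ _
    omega
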